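/- For every integer n ≥ 3, the edge-locating chromatic number of the cycle C_n equals 3 if n = 3, and equals 4 if n ≥ 4. -/

import Mathlib

open SimpleGraph
open scoped Fin.CommRing Fin.NatCast

/-- Distance from a vertex to an edge: the minimum of the distances to the two endpoints. -/
noncomputable def edgeDist {V : Type*} (G : SimpleGraph V) (v : V) (e : Sym2 V) : ℕ :=
  Sym2.lift ⟨fun x y => min (G.dist v x) (G.dist v y), fun _ _ => min_comm _ _⟩ e

/-- Distance (in `ℕ∞`) from a vertex to the `i`-th color class of an edge coloring `c`
(it is `⊤` if the class is empty). -/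
noncomputable def classDist {V : Type*} (G : SimpleGraph V) {k : ℕ} (c : Sym2 V → Fin k)
    (v : V) (i : Fin k) : ℕ∞ :=
  ⨅ e ∈ {e | e ∈ G.edgeSet ∧ c e = i}, (edgeDist G v e : ℕ∞)

/-- `c` is an edge-locating `k`-coloring of `G`: it is a proper edge coloring (distinct edges
sharing an endpoint get different colors), and distinct vertices have distinct edge color codes
`(d(v, C_1), …, d(v, C_k))`. -/
def IsEdgeLocatingColoring {V : Type*} (G : SimpleGraph V) {k : ℕ} (c : Sym2 V → Fin k) : Prop :=
  (∀ e ∈ G.edgeSet, ∀ f ∈ G.edgeSet, e ≠ f → (∃ x, x ∈ e ∧ x ∈ f) → c e ≠ c f) ∧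
  (∀ u v : V, u ≠ v → ∃ i, classDist G c u i ≠ classDist G c v i)

/-- The edge-locating chromatic number `χ'_L(G)`: the least `k` such that `G` admits an
edge-locating `k`-coloring. -/
noncomputable def edgeLocatingChromaticNumber {V : Type*} (G : SimpleGraph V) : ℕ :=
  sInf {k | ∃ c : Sym2 V → Fin k, IsEdgeLocatingColoring G c}

/-- The join `G + H` of two graphs: all edges of `G`, all edges of `H`, and all edges between
a vertex of `G` and a vertex of `H`. -/
def graphJoin {α β : Type*} (G : SimpleGraph α) (H : SimpleGraph β) : SimpleGraph (α ⊕ β) :=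
  SimpleGraph.fromRel (fun x y =>
    (∃ a b, x = Sum.inl a ∧ y = Sum.inl b ∧ G.Adj a b) ∨
    (∃ a b, x = Sum.inr a ∧ y = Sum.inr b ∧ H.Adj a b) ∨
    (∃ a b, x = Sum.inl a ∧ y = Sum.inr b))

/-- A set `M` of edges of `G` forming a matching: pairwise vertex-disjoint edges of `G`. -/
def IsMatchingSet {V : Type*} (G : SimpleGraph V) (M : Set (Sym2 V)) : Prop :=
  M ⊆ G.edgeSet ∧ ∀ e ∈ M, ∀ f ∈ M, e ≠ f → ∀ x, x ∈ e → x ∉ f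

private lemma modsub (n x : ℕ) (hn : 0 < n) (h : x < 2*n) :
    x % n = if x < n then x else x - n := by
  split_ifs with h'
  · exact Nat.mod_eq_of_lt h'
  · rw [Nat.mod_eq_sub_mod (by omega), Nat.mod_eq_of_lt (by omega)]

private lemma sub_val {n : ℕ} (a b : Fin n) : (a - b).val = (n - b.val + a.val) % n := by
  rw [Fin.sub_def]

private lemma add_val {n : ℕ} (a b : Fin n) : (a + b).val = (a.val + b.val) % n := by
  rw [Fin.add_def]

section basic

variable {n : ℕ} [NeZero n]

private lemma val_one_of (hn : 3 ≤ n) : ((1 : Fin n) : ℕ) = 1 := by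
  rw [Fin.val_one']; exact Nat.mod_eq_of_lt (by omega)

private lemma cycle_adj (hn : 3 ≤ n) (u : Fin n) : (cycleGraph n).Adj u (u+1) := by
  rw [cycleGraph_adj']
  right
  have h : u + 1 - u = 1 := by ring
  rw [h, val_one_of hn]

private lemma edge_mem (hn : 3 ≤ n) (w : Fin n) :
    s(w, w+1) ∈ (cycleGraph n).edgeSet := (cycle_adj hn w)

private lemma edge_eq (hn : 3 ≤ n) {e : Sym2 (Fin n)}
    (he : e ∈ (cycleGraph n).edgeSet) : ∃ w : Fin n, e = s(w, w+1) := by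
  induction e using Sym2.ind with
  | _ a b =>
    rw [mem_edgeSet, cycleGraph_adj'] at he
    rcases he with h | h
    · refine ⟨b, ?_⟩
      have hab : a = b + 1 := by
        have h2 : a - b = 1 := by
          apply Fin.ext; rw [h, val_one_of hn]
        linear_combination h2
      subst hab; exact Sym2.eq_swap
    · refine ⟨a, ?_⟩
      have hab : b = a + 1 := by
        have h2 : b - a = 1 := by
          apply Fin.ext; rw [h, val_one_of hn]
        linear_combination h2
      subst hab; rfl

private lemma mem_incident (hn : 3 ≤ n) {e : Sym2 (Fin n)}
    (he : e ∈ (cycleGraph n).edgeSet) {v : Fin n} (hv : v ∈ e) :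
    e = s(v, v+1) ∨ e = s(v-1, v) := by
  obtain ⟨w, rfl⟩ := edge_eq hn he
  rw [Sym2.mem_iff] at hv
  rcases hv with rfl | rfl
  · exact Or.inl rfl
  · right
    have h1 : (w + 1) - 1 = w := by ring
    rw [h1]

private lemma walk_to_add (hn : 3 ≤ n) (t : ℕ) :
    ∀ (u : Fin n), ∃ p : (cycleGraph n).Walk u (u + (t : Fin n)), p.length = t := by
  induction t with
  | zero =>
    intro u
    exact ⟨(Walk.nil' u).copy rfl (by push_cast; ring), by simp⟩
  | succ t ih =>
    intro u
    obtain ⟨p, hp⟩ := ih (u + 1)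
    refine ⟨(Walk.cons (cycle_adj hn u) p).copy rfl
      (show (u + 1) + (t : Fin n) = u + (((t+1 : ℕ)) : Fin n) by push_cast; ring), ?_⟩
    simp [hp]

private lemma disp (hn : 3 ≤ n) {a b : Fin n} (p : (cycleGraph n).Walk a b) :
    ∃ s t : ℕ, s + t = p.length ∧ b - a = (s : Fin n) - (t : Fin n) := by
  induction p with
  | nil => exact ⟨0, 0, rfl, by simp⟩
  | @cons a x b h q ih =>
    obtain ⟨s, t, hst, hd⟩ := ih
    rw [cycleGraph_adj'] at h
    rcases h with h | h
    · have hax : a - x = 1 := by apply Fin.ext; rw [h, val_one_of hn]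
      refine ⟨s, t + 1, by simp [Walk.length_cons]; omega, ?_⟩
      push_cast
      linear_combination hd - hax
    · have hax : x - a = 1 := by apply Fin.ext; rw [h, val_one_of hn]
      refine ⟨s + 1, t, by simp [Walk.length_cons]; omega, ?_⟩
      push_cast
      linear_combination hd + hax

private lemma cycle_dist (hn : 3 ≤ n) (u v : Fin n) :
    (cycleGraph n).dist u v = min ((v - u).val) ((u - v).val) := by
  apply le_antisymm
  · apply le_min
    · obtain ⟨p, hp⟩ := walk_to_add hn ((v - u).val) u
      have hvu : u + (((v - u).val : ℕ) : Fin n) = v := by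
        rw [Fin.cast_val_eq_self]; ring
      calc (cycleGraph n).dist u v ≤ (p.copy rfl hvu).length := dist_le _
        _ = (v - u).val := by simp [hp]
    · obtain ⟨p, hp⟩ := walk_to_add hn ((u - v).val) v
      have hvu : v + (((u - v).val : ℕ) : Fin n) = u := by
        rw [Fin.cast_val_eq_self]; ring
      rw [SimpleGraph.dist_comm]
      calc (cycleGraph n).dist v u ≤ (p.copy rfl hvu).length := dist_le _
        _ = (u - v).val := by simp [hp]
  · have hconn : (cycleGraph n).Connected := by
      obtain ⟨m, rfl⟩ : ∃ m, n = m + 1 := ⟨n - 1, by omega⟩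
      exact cycleGraph_connected
    obtain ⟨p, hp⟩ := (hconn.preconnected u v).exists_walk_length_eq_dist
    obtain ⟨s, t, hst, hd⟩ := disp hn p
    have h1 : (v - u).val = (n - t % n + s % n) % n := by
      rw [hd, sub_val, Fin.val_natCast, Fin.val_natCast]
    have h2 : (u - v).val = (n - s % n + t % n) % n := by
      have hd2 : u - v = (t : Fin n) - (s : Fin n) := by linear_combination -hd
      rw [hd2, sub_val, Fin.val_natCast, Fin.val_natCast]
    have hs : s % n ≤ s := Nat.mod_le _ _
    have ht : t % n ≤ t := Nat.mod_le _ _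
    have hs' : s % n < n := Nat.mod_lt _ (by omega)
    have ht' : t % n < n := Nat.mod_lt _ (by omega)
    rw [h1, h2, modsub n (n - t % n + s % n) (by omega) (by omega),
      modsub n (n - s % n + t % n) (by omega) (by omega)]
    rw [← hp, ← hst]
    simp only [Nat.min_def]
    split_ifs <;> omega

end basic

-- part 2
private lemma edgeDist_mk {V : Type*} (G : SimpleGraph V) (v a b : V) :
    edgeDist G v s(a, b) = min (G.dist v a) (G.dist v b) := rfl

private lemma classDist_le {V : Type*} (G : SimpleGraph V) {k : ℕ} (c : Sym2 V → Fin k)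
    {i : Fin k} {e : Sym2 V} (he : e ∈ G.edgeSet) (hce : c e = i) (v : V) :
    classDist G c v i ≤ (edgeDist G v e : ℕ∞) :=
  iInf₂_le e ⟨he, hce⟩

private lemma classDist_singleton {V : Type*} (G : SimpleGraph V) {k : ℕ} (c : Sym2 V → Fin k)
    {i : Fin k} {e0 : Sym2 V} (h : ∀ e, (e ∈ G.edgeSet ∧ c e = i) ↔ e = e0) (v : V) :
    classDist G c v i = (edgeDist G v e0 : ℕ∞) := by
  refine le_antisymm (iInf₂_le e0 ((h e0).mpr rfl)) ?_
  refine le_iInf₂ fun e he => ?_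
  rw [(h e).mp he]

private lemma classDist_eq_top {V : Type*} (G : SimpleGraph V) {k : ℕ} (c : Sym2 V → Fin k)
    {i : Fin k} (h : ∀ e ∈ G.edgeSet, c e ≠ i) (v : V) :
    classDist G c v i = ⊤ := by
  have hempty : {e | e ∈ G.edgeSet ∧ c e = i} = ∅ := by
    ext e; simp only [Set.mem_setOf_eq, Set.mem_empty_iff_false, iff_false, not_and]
    exact h e
  rw [classDist, hempty]
  simp

private lemma one_le_classDist {V : Type*} (G : SimpleGraph V) {k : ℕ} (c : Sym2 V → Fin k)
    {i : Fin k} {v : V} (h : ∀ e ∈ G.edgeSet, c e = i → edgeDist G v e ≠ 0) :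
    1 ≤ classDist G c v i := by
  refine le_iInf₂ fun e he => ?_
  exact_mod_cast Nat.one_le_iff_ne_zero.mpr (h e he.1 he.2)

private lemma transfer {V : Type*} (G : SimpleGraph V) {k m : ℕ} (h : k ≤ m)
    (c : Sym2 V → Fin k) (hc : IsEdgeLocatingColoring G c) :
    IsEdgeLocatingColoring G (fun e => Fin.castLE h (c e)) := by
  constructor
  · intro e he f hf hef hx hcc
    exact hc.1 e he f hf hef hx (Fin.castLE_injective h hcc)
  · intro u v huv
    obtain ⟨i, hi⟩ := hc.2 u v huv
    refine ⟨Fin.castLE h i, ?_⟩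
    have hset : {e | e ∈ G.edgeSet ∧ Fin.castLE h (c e) = Fin.castLE h i}
        = {e | e ∈ G.edgeSet ∧ c e = i} := by
      ext e
      simp only [Set.mem_setOf_eq, and_congr_right_iff]
      intro _
      exact ⟨fun hh => Fin.castLE_injective h hh, fun hh => by rw [hh]⟩
    simpa only [classDist, hset] using hi

private lemma boundary {n : ℕ} [NeZero n] (hn : 3 ≤ n) {S : Fin n → Prop} {s0 u1 u2 : Fin n}
    (hs0 : S s0) (hu1 : ¬S u1) (hu2 : ¬S u2) (hne : u1 ≠ u2)
    (H : ∀ v w, ¬S v → ¬S w → (S (v+1) ∨ S (v-1)) → (S (w+1) ∨ S (w-1)) → v = w) : False := by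
  classical
  have exF : ∀ u, ¬S u → ∃ t : ℕ, 0 < t ∧ S (u + (t : Fin n)) := by
    intro u hu
    refine ⟨(s0 - u).val, ?_, ?_⟩
    · rcases Nat.eq_zero_or_pos (s0 - u).val with h0 | h0
      · exfalso
        have : s0 - u = 0 := Fin.ext (by simpa using h0)
        have hsu : s0 = u := by linear_combination this
        exact hu (hsu ▸ hs0)
      · exact h0
    · rw [Fin.cast_val_eq_self]
      have : u + (s0 - u) = s0 := by ring
      rwa [this]
  have exG : ∀ u, ¬S u → ∃ t : ℕ, 0 < t ∧ S (u - (t : Fin n)) := by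
    intro u hu
    refine ⟨(u - s0).val, ?_, ?_⟩
    · rcases Nat.eq_zero_or_pos (u - s0).val with h0 | h0
      · exfalso
        have : u - s0 = 0 := Fin.ext (by simpa using h0)
        have hsu : u = s0 := by linear_combination this
        exact hu (hsu ▸ hs0)
      · exact h0
    · rw [Fin.cast_val_eq_self]
      have : u - (u - s0) = s0 := by ring
      rwa [this]
  -- boundary vertex from the + side
  have mkF : ∀ u, (hu : ¬S u) → ∃ w, ¬S w ∧ S (w + 1) ∧
      (w = u ∨ (∃ t : ℕ, 2 ≤ t ∧ (∀ j, 0 < j → j < t → ¬ S (u + (j : Fin n))) ∧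
        w = u + ((t - 1 : ℕ) : Fin n) ∧ S (u + (t : Fin n)))) := by
    intro u hu
    set t := Nat.find (exF u hu) with ht
    obtain ⟨htpos, htS⟩ := Nat.find_spec (exF u hu)
    have hmin : ∀ j, 0 < j → j < t → ¬ S (u + (j : Fin n)) := by
      intro j hj hjt hSj
      exact Nat.find_min (exF u hu) hjt ⟨hj, hSj⟩
    refine ⟨u + ((t - 1 : ℕ) : Fin n), ?_, ?_, ?_⟩
    · rcases Nat.lt_or_ge t 2 with h2 | h2
      · have : t = 1 := by omega
        simpa [this] using hu
      · exact hmin (t-1) (by omega) (by omega)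
    · have he : u + ((t - 1 : ℕ) : Fin n) + 1 = u + (t : Fin n) := by
        have e : (t - 1) + 1 = t := by omega
        rw [← e]; push_cast; ring
      rwa [he]
    · rcases Nat.lt_or_ge t 2 with h2 | h2
      · left; have : t = 1 := by omega
        simp [this]
      · right; exact ⟨t, h2, hmin, rfl, htS⟩
  have mkG : ∀ u, (hu : ¬S u) → ∃ w, ¬S w ∧ S (w - 1) ∧
      (w = u ∨ (∃ t : ℕ, 2 ≤ t ∧ (∀ j, 0 < j → j < t → ¬ S (u - (j : Fin n))) ∧
        w = u - ((t - 1 : ℕ) : Fin n) ∧ S (u - (t : Fin n)))) := by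
    intro u hu
    set t := Nat.find (exG u hu) with ht
    obtain ⟨htpos, htS⟩ := Nat.find_spec (exG u hu)
    have hmin : ∀ j, 0 < j → j < t → ¬ S (u - (j : Fin n)) := by
      intro j hj hjt hSj
      exact Nat.find_min (exG u hu) hjt ⟨hj, hSj⟩
    refine ⟨u - ((t - 1 : ℕ) : Fin n), ?_, ?_, ?_⟩
    · rcases Nat.lt_or_ge t 2 with h2 | h2
      · have : t = 1 := by omega
        simpa [this] using hu
      · exact hmin (t-1) (by omega) (by omega)
    · have he : u - ((t - 1 : ℕ) : Fin n) - 1 = u - (t : Fin n) := by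
        have e : (t - 1) + 1 = t := by omega
        rw [← e]; push_cast; ring
      rwa [he]
    · rcases Nat.lt_or_ge t 2 with h2 | h2
      · left; have : t = 1 := by omega
        simp [this]
      · right; exact ⟨t, h2, hmin, rfl, htS⟩
  obtain ⟨w1, hw1, hw1p, hw1c⟩ := mkF u1 hu1
  obtain ⟨w1', hw1', hw1'm, hw1'c⟩ := mkG u1 hu1
  obtain ⟨w2, hw2, hw2p, hw2c⟩ := mkF u2 hu2
  have e1 : w1 = w1' := H _ _ hw1 hw1' (Or.inl hw1p) (Or.inr hw1'm)
  have e2 : w2 = w1 := H _ _ hw2 hw1 (Or.inl hw2p) (Or.inl hw1p)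
  have hminus : S (w1 - 1) := by rw [e1]; exact hw1'm
  -- w1 = u1
  have hw1u1 : w1 = u1 := by
    rcases hw1c with h | ⟨t, h2, hmin, hw, hS⟩
    · exact h
    · exfalso
      have hx : w1 - 1 = u1 + ((t - 2 : ℕ) : Fin n) := by
        have e : (t - 2) + 1 = t - 1 := by omega
        rw [hw, show ((t - 1 : ℕ) : Fin n) = ((t - 2 : ℕ) : Fin n) + 1 by rw [← e]; push_cast; ring]
        ring
      rcases Nat.lt_or_ge t 3 with h3 | h3
      · have ht2 : t = 2 := by omega
        rw [hx, ht2] at hminus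
        simp at hminus
        exact hu1 hminus
      · exact hmin (t - 2) (by omega) (by omega) (hx ▸ hminus)
  have hw2u2 : w2 = u2 := by
    have hminus2 : S (w2 - 1) := by rw [e2]; exact hminus
    rcases hw2c with h | ⟨t, h2, hmin, hw, hS⟩
    · exact h
    · exfalso
      have hx : w2 - 1 = u2 + ((t - 2 : ℕ) : Fin n) := by
        have e : (t - 2) + 1 = t - 1 := by omega
        rw [hw, show ((t - 1 : ℕ) : Fin n) = ((t - 2 : ℕ) : Fin n) + 1 by rw [← e]; push_cast; ring]
        ring
      rcases Nat.lt_or_ge t 3 with h3 | h3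
      · have ht2 : t = 2 := by omega
        rw [hx, ht2] at hminus2
        simp at hminus2
        exact hu2 hminus2
      · exact hmin (t - 2) (by omega) (by omega) (hx ▸ hminus2)
  exact hne (by rw [← hw1u1, ← hw2u2, e2])

-- part 3 : lower bounds
private lemma pigeon3 : ∀ (i j a b : Fin 3), a ≠ b → i ≠ a → i ≠ b → j ≠ i → (j = a ∨ j = b) := by
  decide

private lemma no3 {n : ℕ} (hn : 4 ≤ n) (c : Sym2 (Fin n) → Fin 3)
    (hc : IsEdgeLocatingColoring (cycleGraph n) c) : False := by
  haveI : NeZero n := ⟨by omega⟩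
  have h3 : 3 ≤ n := by omega
  classical
  set G := cycleGraph n with hG
  let E1 : Fin n → Sym2 (Fin n) := fun v => s(v, v+1)
  let E2 : Fin n → Sym2 (Fin n) := fun v => s(v-1, v)
  have hE2eq : ∀ v, E2 v = s(v-1, (v-1)+1) := by
    intro v
    show s(v-1, v) = s(v-1, (v-1)+1)
    have : v - 1 + 1 = v := by ring
    rw [this]
  have hE1mem : ∀ v, E1 v ∈ G.edgeSet := fun v => edge_mem h3 v
  have hE2mem : ∀ v, E2 v ∈ G.edgeSet := fun v => by rw [hE2eq]; exact edge_mem h3 _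
  have two_ne : ((1 : Fin n) + 1) ≠ 0 := by
    intro h
    have := congrArg Fin.val h
    rw [add_val, val_one_of h3, Fin.val_zero, Nat.mod_eq_of_lt (by omega)] at this
    omega
  have one_ne : (1 : Fin n) ≠ 0 := by
    intro h
    have := congrArg Fin.val h
    rw [val_one_of h3, Fin.val_zero] at this
    omega
  have hE1E2 : ∀ v, E1 v ≠ E2 v := by
    intro v h
    rcases Sym2.eq_iff.mp h with ⟨h1, h2⟩ | ⟨h1, h2⟩
    · exact one_ne (by linear_combination h2)
    · exact two_ne (by linear_combination h2)
  have hprop : ∀ v, c (E1 v) ≠ c (E2 v) := by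
    intro v
    exact hc.1 _ (hE1mem v) _ (hE2mem v) (hE1E2 v)
      ⟨v, by simp [E1], by simp [E2]⟩
  set cov : Fin 3 → Fin n → Prop := fun i v => c (E1 v) = i ∨ c (E2 v) = i with hcov
  have hdist0 : ∀ x y : Fin n, G.dist x y = 0 → x = y := by
    intro x y h
    rw [hG, cycle_dist h3] at h
    rcases Nat.min_eq_zero_iff.mp h with h' | h'
    · have : y - x = 0 := Fin.ext (by simpa using h')
      linear_combination -this
    · have : x - y = 0 := Fin.ext (by simpa using h')
      linear_combination this
  have hzero : ∀ v i, cov i v → classDist G c v i = 0 := by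
    intro v i hcovi
    apply le_antisymm _ (zero_le (a := classDist G c v i))
    rcases hcovi with h | h
    · refine le_trans (classDist_le G c (hE1mem v) h v) ?_
      have : edgeDist G v (E1 v) = 0 := by
        show min (G.dist v v) (G.dist v (v+1)) = 0
        simp
      rw [this]; simp
    · refine le_trans (classDist_le G c (hE2mem v) h v) ?_
      have : edgeDist G v (E2 v) = 0 := by
        show min (G.dist v (v-1)) (G.dist v v) = 0
        simp
      rw [this]; simp
  have hge1 : ∀ v i, ¬cov i v → 1 ≤ classDist G c v i := by
    intro v i hv
    refine one_le_classDist G c ?_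
    intro e he hce h0
    obtain ⟨w, rfl⟩ := edge_eq h3 he
    have h0' : G.dist v w = 0 ∨ G.dist v (w+1) = 0 := by
      have : min (G.dist v w) (G.dist v (w+1)) = 0 := h0
      exact Nat.min_eq_zero_iff.mp this
    have hvmem : v ∈ s(w, w+1) := by
      rcases h0' with h' | h'
      · rw [hdist0 _ _ h']; simp
      · rw [hdist0 _ _ h']; simp
    rcases mem_incident h3 he hvmem with h' | h'
    · refine hv (Or.inl ?_)
      show c s(v, v+1) = i
      rw [← h']; exact hce
    · refine hv (Or.inr ?_)
      show c s(v-1, v) = i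
      rw [← h']; exact hce
  have hadj_dist : ∀ v w : Fin n, G.Adj v w → G.dist v w ≤ 1 := by
    intro v w h
    have := dist_le (Walk.cons h (Walk.nil' w))
    simpa using this
  have hle1 : ∀ v w i, G.Adj v w → cov i w → ¬cov i v → classDist G c v i ≤ 1 := by
    intro v w i hadj hcw hcv
    have hd : G.dist v w ≤ 1 := hadj_dist v w hadj
    rcases hcw with h | h
    · refine le_trans (classDist_le G c (hE1mem w) h v) ?_
      have : edgeDist G v (E1 w) ≤ 1 := by
        show min (G.dist v w) (G.dist v (w+1)) ≤ 1
        exact le_trans (min_le_left _ _) hd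
      exact_mod_cast this
    · refine le_trans (classDist_le G c (hE2mem w) h v) ?_
      have : edgeDist G v (E2 w) ≤ 1 := by
        show min (G.dist v (w-1)) (G.dist v w) ≤ 1
        exact le_trans (min_le_right _ _) hd
      exact_mod_cast this
  have hkey : ∀ i (u v : Fin n), ¬cov i u → ¬cov i v →
      classDist G c u i = classDist G c v i → u = v := by
    intro i u v hu hv hcd
    by_contra hne
    obtain ⟨j, hj⟩ := hc.2 u v hne
    rcases eq_or_ne j i with rfl | hji
    · exact hj hcd
    · have hcovju : cov j u := by
        rcases pigeon3 i j (c (E1 u)) (c (E2 u)) (hprop u)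
          (fun h => hu (Or.inl h.symm)) (fun h => hu (Or.inr h.symm)) hji with h | h
        · exact Or.inl h.symm
        · exact Or.inr h.symm
      have hcovjv : cov j v := by
        rcases pigeon3 i j (c (E1 v)) (c (E2 v)) (hprop v)
          (fun h => hv (Or.inl h.symm)) (fun h => hv (Or.inr h.symm)) hji with h | h
        · exact Or.inl h.symm
        · exact Or.inr h.symm
      exact hj (by rw [hzero u j hcovju, hzero v j hcovjv])
  have hadj_succ : ∀ v : Fin n, G.Adj v (v + 1) := fun v => cycle_adj h3 v
  have hadj_pred : ∀ v : Fin n, G.Adj v (v - 1) := by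
    intro v
    have := (cycle_adj h3 (v-1)).symm
    have h1 : v - 1 + 1 = v := by ring
    rwa [h1] at this
  have huncov : ∀ i (u v : Fin n), ¬cov i u → ¬cov i v → u = v := by
    intro i u v hu hv
    by_cases hex : ∃ w, cov i w
    · obtain ⟨w0, hw0⟩ := hex
      by_contra hne
      refine boundary h3 hw0 hu hv hne ?_
      intro v1 v2 h1 h2 hb1 hb2
      have hcd1 : classDist G c v1 i = 1 := by
        refine le_antisymm ?_ (hge1 v1 i h1)
        rcases hb1 with hb | hb
        · exact hle1 v1 (v1+1) i (hadj_succ v1) hb h1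
        · exact hle1 v1 (v1-1) i (hadj_pred v1) hb h1
      have hcd2 : classDist G c v2 i = 1 := by
        refine le_antisymm ?_ (hge1 v2 i h2)
        rcases hb2 with hb | hb
        · exact hle1 v2 (v2+1) i (hadj_succ v2) hb h2
        · exact hle1 v2 (v2-1) i (hadj_pred v2) hb h2
      exact hkey i v1 v2 h1 h2 (by rw [hcd1, hcd2])
    · push_neg at hex
      have hnone : ∀ e ∈ G.edgeSet, c e ≠ i := by
        intro e he hei
        obtain ⟨w, rfl⟩ := edge_eq h3 he
        exact hex w (Or.inl hei)
      exact hkey i u v hu hv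
        (by rw [classDist_eq_top G c hnone u, classDist_eq_top G c hnone v])
  -- counting
  have hcard : ∀ i : Fin 3, (Finset.univ.filter (fun v => ¬ cov i v)).card ≤ 1 := by
    intro i
    refine Finset.card_le_one.mpr ?_
    intro a ha b hb
    rw [Finset.mem_filter] at ha hb
    exact huncov i a b ha.2 hb.2
  have hcov2 : ∀ v, (Finset.univ.filter (fun i => cov i v)).card = 2 := by
    intro v
    have hset : Finset.univ.filter (fun i => cov i v) = {c (E1 v), c (E2 v)} := by
      ext j
      simp only [Finset.mem_filter, Finset.mem_univ, true_and, Finset.mem_insert,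
        Finset.mem_singleton, hcov]
      constructor
      · rintro (h | h) <;> [exact Or.inl h.symm; exact Or.inr h.symm]
      · rintro (h | h) <;> [exact Or.inl h.symm; exact Or.inr h.symm]
    rw [hset, Finset.card_pair (hprop v)]
  have hsum : ∑ i : Fin 3, (Finset.univ.filter (fun v => cov i v)).card = 2 * n := by
    have h1 : ∀ i : Fin 3, (Finset.univ.filter (fun v => cov i v)).card
        = ∑ v : Fin n, (if cov i v then 1 else 0) := by
      intro i; rw [Finset.card_filter]
    have h2 : ∀ v : Fin n, (Finset.univ.filter (fun i => cov i v)).card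
        = ∑ i : Fin 3, (if cov i v then 1 else 0) := by
      intro v; rw [Finset.card_filter]
    calc ∑ i : Fin 3, (Finset.univ.filter (fun v => cov i v)).card
        = ∑ i : Fin 3, ∑ v : Fin n, (if cov i v then 1 else 0) := by
          exact Finset.sum_congr rfl (fun i _ => h1 i)
      _ = ∑ v : Fin n, ∑ i : Fin 3, (if cov i v then 1 else 0) := Finset.sum_comm
      _ = ∑ v : Fin n, 2 := Finset.sum_congr rfl (fun v _ => by rw [← h2 v, hcov2 v])
      _ = 2 * n := by simp [Finset.card_univ, Nat.mul_comm]
  have hlow : ∀ i : Fin 3, n - 1 ≤ (Finset.univ.filter (fun v => cov i v)).card := by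
    intro i
    have := Finset.card_filter_add_card_filter_not
      (s := (Finset.univ : Finset (Fin n))) (p := fun v => cov i v)
    have hcu : (Finset.univ : Finset (Fin n)).card = n := by simp
    have := hcard i
    omega
  have : 3 * (n - 1) ≤ 2 * n := by
    calc 3 * (n - 1) = ∑ _i : Fin 3, (n - 1) := by simp [Finset.card_univ]
      _ ≤ ∑ i : Fin 3, (Finset.univ.filter (fun v => cov i v)).card :=
          Finset.sum_le_sum (fun i _ => hlow i)
      _ = 2 * n := hsum
  omega

private lemma no2 (c : Sym2 (Fin 3) → Fin 2)
    (hc : IsEdgeLocatingColoring (cycleGraph 3) c) : False := by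
  have m1 : s((0 : Fin 3), 1) ∈ (cycleGraph 3).edgeSet := by decide
  have m2 : s((1 : Fin 3), 2) ∈ (cycleGraph 3).edgeSet := by decide
  have m3 : s((2 : Fin 3), 0) ∈ (cycleGraph 3).edgeSet := by decide
  have h12 := hc.1 _ m1 _ m2 (by decide) ⟨1, by decide, by decide⟩
  have h23 := hc.1 _ m2 _ m3 (by decide) ⟨2, by decide, by decide⟩
  have h13 := hc.1 _ m1 _ m3 (by decide) ⟨0, by decide, by decide⟩
  have v1 := (c s((0 : Fin 3), 1)).isLt
  have v2 := (c s((1 : Fin 3), 2)).isLt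
  have v3 := (c s((2 : Fin 3), 0)).isLt
  rw [Fin.ne_iff_vne] at h12 h23 h13
  omega

-- part 4 : upper bounds
private def ccol3 : Sym2 (Fin 3) → Fin 3 :=
  Sym2.lift ⟨fun x y => if y = x + 1 then x else if x = y + 1 then y else 0, by decide⟩

private lemma ccol3_edge : ∀ w : Fin 3, ccol3 s(w, w+1) = w := by decide

private lemma class_i3 (i : Fin 3) :
    ∀ e, (e ∈ (cycleGraph 3).edgeSet ∧ ccol3 e = i) ↔ e = s(i, i+1) := by
  intro e
  constructor
  · rintro ⟨he, hce⟩
    obtain ⟨w, rfl⟩ := edge_eq (by norm_num) he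
    rw [ccol3_edge] at hce
    rw [hce]
  · rintro rfl
    exact ⟨edge_mem (by norm_num) i, ccol3_edge i⟩

private lemma dist3 : ∀ u w : Fin 3, u ≠ w → (cycleGraph 3).dist u w = 1 := by
  have key : ∀ u w : Fin 3, u ≠ w → min ((w-u).val) ((u-w).val) = 1 := by decide
  intro u w h
  rw [cycle_dist (by norm_num)]
  exact key u w h

private lemma cd3 (v i : Fin 3) :
    classDist (cycleGraph 3) ccol3 v i = (((if v = i ∨ v = i + 1 then 0 else 1) : ℕ) : ℕ∞) := by
  rw [classDist_singleton (cycleGraph 3) ccol3 (class_i3 i) v, edgeDist_mk]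
  congr 1
  by_cases h1 : v = i
  · subst h1; simp
  · by_cases h2 : v = i + 1
    · subst h2; simp
    · rw [if_neg (by tauto), dist3 v i h1, dist3 v (i+1) h2]
      simp

private lemma upper3 : IsEdgeLocatingColoring (cycleGraph 3) ccol3 := by
  constructor
  · intro e he f hf hef _ hcc
    obtain ⟨w, rfl⟩ := edge_eq (by norm_num) he
    obtain ⟨x, rfl⟩ := edge_eq (by norm_num) hf
    rw [ccol3_edge, ccol3_edge] at hcc
    exact hef (by rw [hcc])
  · intro u v huv
    refine ⟨u + 1, ?_⟩
    rw [cd3 u (u+1), cd3 v (u+1)]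
    have h1 : ¬(u = u + 1 ∨ u = u + 1 + 1) := by revert huv; revert u v; decide
    have h2 : (v = u + 1 ∨ v = u + 1 + 1) := by revert huv; revert u v; decide
    rw [if_neg h1, if_pos h2]
    simp

section upper4

variable {n : ℕ} [NeZero n]

private def gcol (n : ℕ) [NeZero n] : Fin n → Fin 4 := fun u =>
  if u + 1 = 0 then 3 else if u = 0 then 2 else if u.val % 2 = 1 then 0 else 1

private def ccolf (n : ℕ) [NeZero n] : Fin n → Fin n → Fin 4 := fun x y =>
  if y = x + 1 then (if x = y + 1 then 0 else gcol n x)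
  else if x = y + 1 then gcol n y else 0

private lemma ccolf_symm (n : ℕ) [NeZero n] : ∀ x y, ccolf n x y = ccolf n y x := by
  intro x y
  unfold ccolf
  split_ifs <;> rfl

private def ccol (n : ℕ) [NeZero n] : Sym2 (Fin n) → Fin 4 :=
  Sym2.lift ⟨ccolf n, ccolf_symm n⟩

private lemma one_ne (hn : 3 ≤ n) : (1 : Fin n) ≠ 0 := by
  intro h
  have := congrArg Fin.val h
  rw [val_one_of hn, Fin.val_zero] at this
  omega

private lemma ccol_edge (hn : 4 ≤ n) (w : Fin n) : ccol n s(w, w+1) = gcol n w := by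
  rw [ccol, Sym2.lift_mk]
  show ccolf n w (w+1) = gcol n w
  unfold ccolf
  rw [if_pos rfl, if_neg]
  intro h
  have h2 : ((1:Fin n) + 1) = 0 := by linear_combination -h
  have := congrArg Fin.val h2
  rw [add_val, val_one_of (by omega), Fin.val_zero, Nat.mod_eq_of_lt (by omega)] at this
  omega

private lemma gcol_ne (hn : 4 ≤ n) (w : Fin n) : gcol n w ≠ gcol n (w + 1) := by
  have hk : w.val < n := w.isLt
  have hv1 : (w + 1).val = (w.val + 1) % n := by rw [add_val, val_one_of (by omega)]
  by_cases hA : w + 1 = 0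
  · have h1 : gcol n w = 3 := by unfold gcol; rw [if_pos hA]
    have h2 : gcol n 0 = 2 := by
      unfold gcol
      rw [if_neg (by rw [zero_add]; exact one_ne (by omega)), if_pos rfl]
    rw [hA, h1, h2]; decide
  · by_cases hB : w + 1 + 1 = 0
    · have h1 : gcol n (w+1) = 3 := by unfold gcol; rw [if_pos hB]
      have h2 : gcol n w ≠ 3 := by
        unfold gcol; rw [if_neg hA]; split_ifs <;> decide
      rw [h1]; exact h2
    · have hkn : w.val + 1 < n := by
        by_contra hcon
        have hkk : w.val + 1 = n := by omega
        exact hA (Fin.ext (by rw [hv1, Fin.val_zero, hkk, Nat.mod_self]))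
      have hv1' : (w+1).val = w.val + 1 := by rw [hv1, Nat.mod_eq_of_lt hkn]
      by_cases hC : w = 0
      · have h1 : gcol n w = 2 := by unfold gcol; rw [if_neg hA, if_pos hC]
        have h2 : gcol n (w+1) ≠ 2 := by
          unfold gcol
          rw [if_neg hB, if_neg hA]
          split_ifs <;> decide
        rw [h1]
        exact fun h => h2 h.symm
      · have h1 : gcol n w = (if w.val % 2 = 1 then (0:Fin 4) else 1) := by
          unfold gcol; rw [if_neg hA, if_neg hC]
        have h2 : gcol n (w+1) = (if (w.val+1) % 2 = 1 then (0:Fin 4) else 1) := by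
          unfold gcol; rw [if_neg hB, if_neg hA, hv1']
        rw [h1, h2]
        split_ifs <;> first | (exfalso; omega) | decide

private lemma class2 (hn : 4 ≤ n) :
    ∀ e, (e ∈ (cycleGraph n).edgeSet ∧ ccol n e = 2) ↔ e = s((0:Fin n), 1) := by
  have h3 : 3 ≤ n := by omega
  have hz : s((0:Fin n), 1) = s((0:Fin n), 0 + 1) := by rw [zero_add]
  intro e
  constructor
  · rintro ⟨he, hce⟩
    obtain ⟨w, rfl⟩ := edge_eq h3 he
    rw [ccol_edge hn] at hce
    unfold gcol at hce
    split_ifs at hce with c1 c2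
    · exact absurd hce (by decide)
    · rw [hz, c2]
    · exact absurd hce (by decide)
    · exact absurd hce (by decide)
  · rintro rfl
    rw [hz]
    refine ⟨edge_mem h3 0, ?_⟩
    rw [ccol_edge hn]
    unfold gcol
    rw [if_neg (by rw [zero_add]; exact one_ne h3), if_pos rfl]

private lemma class3 (hn : 4 ≤ n) :
    ∀ e, (e ∈ (cycleGraph n).edgeSet ∧ ccol n e = 3) ↔ e = s((0:Fin n) - 1, 0) := by
  have h3 : 3 ≤ n := by omega
  have hz1 : ((0:Fin n) - 1) + 1 = 0 := by ring
  have hz : s((0:Fin n) - 1, (0:Fin n)) = s((0:Fin n) - 1, ((0:Fin n) - 1) + 1) := by rw [hz1]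
  intro e
  constructor
  · rintro ⟨he, hce⟩
    obtain ⟨w, rfl⟩ := edge_eq h3 he
    rw [ccol_edge hn] at hce
    unfold gcol at hce
    split_ifs at hce with c1 c2 c3
    · have hw : w = (0:Fin n) - 1 := by linear_combination c1
      rw [hz, hw]
    · exact absurd hce (by decide)
    · exact absurd hce (by decide)
    · exact absurd hce (by decide)
  · rintro rfl
    rw [hz]
    refine ⟨edge_mem h3 _, ?_⟩
    rw [ccol_edge hn]
    unfold gcol
    rw [if_pos hz1]

private lemma Aval (hn : 4 ≤ n) (v : Fin n) :
    min ((cycleGraph n).dist v 0) ((cycleGraph n).dist v 1)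
      = if v.val = 0 then 0 else min (v.val - 1) (n - v.val) := by
  have h3 : 3 ≤ n := by omega
  have hk : v.val < n := v.isLt
  rw [cycle_dist h3 v 0, cycle_dist h3 v 1, sub_zero,
    sub_val (0:Fin n) v, sub_val (1:Fin n) v, sub_val v (1:Fin n),
    Fin.val_zero, val_one_of h3]
  rw [modsub n (n - v.val + 0) (by omega) (by omega),
    modsub n (n - v.val + 1) (by omega) (by omega),
    modsub n (n - 1 + v.val) (by omega) (by omega)]
  simp only [Nat.min_def]
  split_ifs <;> omega

private lemma Bval (hn : 4 ≤ n) (v : Fin n) :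
    min ((cycleGraph n).dist v ((0:Fin n) - 1)) ((cycleGraph n).dist v 0)
      = if v.val = n - 1 then 0 else min v.val (n - 1 - v.val) := by
  have h3 : 3 ≤ n := by omega
  have hk : v.val < n := v.isLt
  have hz : ((0:Fin n) - 1).val = n - 1 := by
    rw [sub_val, val_one_of h3, Fin.val_zero, Nat.add_zero, Nat.mod_eq_of_lt (by omega)]
  rw [cycle_dist h3 v ((0:Fin n) - 1), cycle_dist h3 v 0, sub_zero,
    sub_val ((0:Fin n) - 1) v, sub_val v ((0:Fin n) - 1), sub_val (0:Fin n) v,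
    hz, Fin.val_zero]
  rw [modsub n (n - v.val + (n - 1)) (by omega) (by omega),
    modsub n (n - (n - 1) + v.val) (by omega) (by omega),
    modsub n (n - v.val + 0) (by omega) (by omega)]
  simp only [Nat.min_def]
  split_ifs <;> omega

private lemma keyarith (n k l : ℕ) (hn : 4 ≤ n) (hk : k < n) (hl : l < n) (hkl : k ≠ l)
    (hA : (if k = 0 then 0 else min (k-1) (n-k)) = (if l = 0 then 0 else min (l-1) (n-l)))
    (hB : (if k = n-1 then 0 else min k (n-1-k)) = (if l = n-1 then 0 else min l (n-1-l))) :
    False := by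
  simp only [Nat.min_def] at hA hB
  split_ifs at hA hB <;> omega

private lemma upper4 (hn : 4 ≤ n) : IsEdgeLocatingColoring (cycleGraph n) (ccol n) := by
  have h3 : 3 ≤ n := by omega
  constructor
  · rintro e he f hf hef ⟨x, hxe, hxf⟩
    obtain ⟨w, rfl⟩ := edge_eq h3 he
    obtain ⟨w', rfl⟩ := edge_eq h3 hf
    rw [ccol_edge hn, ccol_edge hn]
    rw [Sym2.mem_iff] at hxe hxf
    rcases hxe with rfl | rfl <;> rcases hxf with h | h
    · exact absurd (by rw [h]) hef
    · rw [h]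
      exact (gcol_ne hn w').symm
    · rw [← h]
      exact gcol_ne hn w
    · have hww : w = w' := by linear_combination h
      exact absurd (by rw [hww]) hef
  · intro u v huv
    have hkl : u.val ≠ v.val := fun h => huv (Fin.ext h)
    have hcd2 : ∀ w : Fin n, classDist (cycleGraph n) (ccol n) w 2
        = (((if w.val = 0 then 0 else min (w.val - 1) (n - w.val)) : ℕ) : ℕ∞) := by
      intro w
      rw [classDist_singleton (cycleGraph n) (ccol n) (class2 hn) w, edgeDist_mk, Aval hn w]
    have hcd3 : ∀ w : Fin n, classDist (cycleGraph n) (ccol n) w 3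
        = (((if w.val = n - 1 then 0 else min w.val (n - 1 - w.val)) : ℕ) : ℕ∞) := by
      intro w
      rw [classDist_singleton (cycleGraph n) (ccol n) (class3 hn) w, edgeDist_mk, Bval hn w]
    by_cases hAB : (if u.val = 0 then 0 else min (u.val - 1) (n - u.val))
        = (if v.val = 0 then 0 else min (v.val - 1) (n - v.val))
    · refine ⟨3, ?_⟩
      rw [hcd3 u, hcd3 v]
      intro hcast
      exact keyarith n u.val v.val hn u.isLt v.isLt hkl hAB (Nat.cast_inj.mp hcast)
    · refine ⟨2, ?_⟩
      rw [hcd2 u, hcd2 v]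
      exact fun hcast => hAB (Nat.cast_inj.mp hcast)

end upper4


/-- For every integer `n ≥ 3`, the edge-locating chromatic number of the cycle `C_n` equals
`3` if `n = 3` and `4` if `n ≥ 4`. -/
theorem stmt_1 (n : ℕ) (hn : 3 ≤ n) :
    edgeLocatingChromaticNumber (SimpleGraph.cycleGraph n) = if n = 3 then 3 else 4 := by
  by_cases h : n = 3
  · subst h
    rw [if_pos rfl]
    apply le_antisymm
    · exact Nat.sInf_le ⟨ccol3, upper3⟩
    · refine le_csInf ⟨3, ccol3, upper3⟩ ?_
      rintro b ⟨c, hcb⟩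
      by_contra hlt
      push_neg at hlt
      exact no2 (fun e => Fin.castLE (by omega) (c e)) (transfer _ (by omega) c hcb)
  · haveI : NeZero n := ⟨by omega⟩
    have hn4 : 4 ≤ n := by omega
    rw [if_neg h]
    apply le_antisymm
    · exact Nat.sInf_le ⟨ccol n, upper4 hn4⟩
    · refine le_csInf ⟨4, ccol n, upper4 hn4⟩ ?_
      rintro b ⟨c, hcb⟩
      by_contra hlt
      push_neg at hlt
      exact no3 hn4 (fun e => Fin.castLE (by omega) (c e)) (transfer _ (by omega) c hcb)
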